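/- For the classical Zernike Hamiltonian H = p1^2 + p2^2 + γ1(q1 p1 + q2 p2) + γ2(q1 p1 + q2 p2)^2, the function I = p2^2 + γ1 q2 p2 + γ2 (q1^2 + q2^2) p2^2 is a constant of the motion, i.e. {H, I} = 0. -/

import Mathlib

open Real

/-- Canonical Poisson bracket on ℝ⁴ with coordinates (q1, q2, p1, p2). -/
noncomputable def pb (f g : ℝ → ℝ → ℝ → ℝ → ℝ) : ℝ → ℝ → ℝ → ℝ → ℝ :=
  fun q1 q2 p1 p2 =>
      deriv (fun x => f x q2 p1 p2) q1 * deriv (fun x => g q1 q2 x p2) p1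
    + deriv (fun x => f q1 x p1 p2) q2 * deriv (fun x => g q1 q2 p1 x) p2
    - deriv (fun x => f q1 q2 x p2) p1 * deriv (fun x => g x q2 p1 p2) q1
    - deriv (fun x => f q1 q2 p1 x) p2 * deriv (fun x => g q1 x p1 p2) q2

lemma deriv_hmul (c x : ℝ) : deriv (HMul.hMul c) x = c := by
  have : (HMul.hMul c : ℝ → ℝ) = fun y => c * y := rfl
  rw [this, deriv_const_mul_field']
  simp

theorem zernike_I_is_constant_of_motion (γ1 γ2 : ℝ) :
    pb (fun q1 q2 p1 p2 => p1^2 + p2^2 + γ1*(q1*p1 + q2*p2) + γ2*(q1*p1 + q2*p2)^2)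
       (fun q1 q2 p1 p2 => p2^2 + γ1*q2*p2 + γ2*(q1^2 + q2^2)*p2^2) = 0 := by
  funext q1 q2 p1 p2
  simp only [pb, Pi.zero_apply]
  simp (disch := fun_prop) only [deriv_fun_add, deriv_fun_mul, deriv_pow_field, deriv_const_mul,
    deriv_const_add, deriv_add_const, deriv_id'', deriv_const', deriv_fun_pow, deriv_mul_const_field', deriv_const_mul_field', deriv_hmul]
  ring
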